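/- Fix u₀ > 0 and 0 < κ₁ < κ₂. Let uᵢ be the solutions of u' = v/√(1+v²), v' = κᵢ·u with uᵢ(0) = u₀, vᵢ(0) = 0 (i = 1,2). Then u₁(r) < u₂(r) for all r ≠ 0, and u₁'(r) < u₂'(r) for all r > 0. -/

import Mathlib

lemma sqrt1sq_pos (v : ℝ) : 0 < Real.sqrt (1 + v ^ 2) :=
  Real.sqrt_pos.2 (by positivity)

lemma g_strictMono : StrictMono (fun v : ℝ => v / Real.sqrt (1 + v ^ 2)) := by
  intro a b hab
  have ha := sqrt1sq_pos a
  have hb := sqrt1sq_pos b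
  have hsa : Real.sqrt (1 + a ^ 2) ^ 2 = 1 + a ^ 2 := Real.sq_sqrt (by positivity)
  have hsb : Real.sqrt (1 + b ^ 2) ^ 2 = 1 + b ^ 2 := Real.sq_sqrt (by positivity)
  simp only
  rw [div_lt_div_iff₀ ha hb]
  rcases le_or_gt 0 a with h0a | h0a
  · have h0b : 0 < b := lt_of_le_of_lt h0a hab
    have h1 : (a * Real.sqrt (1 + b ^ 2)) ^ 2 < (b * Real.sqrt (1 + a ^ 2)) ^ 2 := by
      nlinarith [sq_nonneg a, sq_nonneg b]
    exact lt_of_pow_lt_pow_left₀ 2 (by positivity) h1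
  · rcases le_or_gt b 0 with hb0 | hb0
    · have h1 : (-(b * Real.sqrt (1 + a ^ 2))) ^ 2 < (-(a * Real.sqrt (1 + b ^ 2))) ^ 2 := by
        nlinarith
      have h2 : -(b * Real.sqrt (1 + a ^ 2)) < -(a * Real.sqrt (1 + b ^ 2)) :=
        lt_of_pow_lt_pow_left₀ 2 (by nlinarith) h1
      linarith
    · nlinarith

lemma g_lt {a b : ℝ} (h : a < b) :
    a / Real.sqrt (1 + a ^ 2) < b / Real.sqrt (1 + b ^ 2) := g_strictMono h

lemma g_nonneg {a : ℝ} (h : 0 ≤ a) : 0 ≤ a / Real.sqrt (1 + a ^ 2) :=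
  div_nonneg h (Real.sqrt_nonneg _)

lemma key_pos (u₀ κ₁ κ₂ : ℝ) (hu₀ : 0 < u₀) (hκ₁ : 0 < κ₁) (hκ : κ₁ < κ₂)
    (u₁ v₁ u₂ v₂ : ℝ → ℝ)
    (hu₁ : ∀ r : ℝ, HasDerivAt u₁ (v₁ r / Real.sqrt (1 + v₁ r ^ 2)) r)
    (hv₁ : ∀ r : ℝ, HasDerivAt v₁ (κ₁ * u₁ r) r)
    (hu₁0 : u₁ 0 = u₀) (hv₁0 : v₁ 0 = 0)
    (hu₂ : ∀ r : ℝ, HasDerivAt u₂ (v₂ r / Real.sqrt (1 + v₂ r ^ 2)) r)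
    (hv₂ : ∀ r : ℝ, HasDerivAt v₂ (κ₂ * u₂ r) r)
    (hu₂0 : u₂ 0 = u₀) (hv₂0 : v₂ 0 = 0) :
    ∀ r : ℝ, 0 < r → u₁ r < u₂ r ∧ v₁ r < v₂ r := by
  have hcu₁ : Continuous u₁ := by
    rw [continuous_iff_continuousAt]; exact fun x => (hu₁ x).continuousAt
  have hcv₁ : Continuous v₁ := by
    rw [continuous_iff_continuousAt]; exact fun x => (hv₁ x).continuousAt
  have hcu₂ : Continuous u₂ := by
    rw [continuous_iff_continuousAt]; exact fun x => (hu₂ x).continuousAt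
  have hcv₂ : Continuous v₂ := by
    rw [continuous_iff_continuousAt]; exact fun x => (hv₂ x).continuousAt
  -- the invariant region
  set P : ℝ → Prop := fun r => 0 ≤ v₁ r ∧ u₀ ≤ u₁ r ∧ v₁ r ≤ v₂ r ∧ u₁ r ≤ u₂ r with hP
  have hP0 : P 0 := by
    refine ⟨by rw [hv₁0], by rw [hu₁0], by rw [hv₁0, hv₂0], by rw [hu₁0, hu₂0]⟩
  have hQ : ∀ r : ℝ, 0 ≤ r → P r := by
    by_contra hcon
    push_neg at hcon
    obtain ⟨b₀, hb₀, hb₀P⟩ := hcon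
    set B : Set ℝ := {r | 0 ≤ r ∧ ¬ P r} with hBdef
    have hBne : B.Nonempty := ⟨b₀, hb₀, hb₀P⟩
    have hBbdd : BddBelow B := ⟨0, fun x hx => hx.1⟩
    set T : ℝ := sInf B with hTdef
    have hT0 : 0 ≤ T := le_csInf hBne fun x hx => hx.1
    have hPbelow : ∀ s, 0 ≤ s → s < T → P s := by
      intro s hs hsT
      by_contra hnp
      exact absurd hsT (not_lt.2 (csInf_le hBbdd ⟨hs, hnp⟩))
    have hPT : P T := by
      rcases eq_or_lt_of_le hT0 with hT | hT
      · rw [← hT]; exact hP0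
      · have hlim : ∀ f : ℝ → ℝ, Continuous f → (∀ s ∈ Set.Ioo 0 T, 0 ≤ f s) → 0 ≤ f T := by
          intro f hf h
          refine ge_of_tendsto (hf.continuousAt.mono_left (nhdsWithin_le_nhds (s := Set.Iio T)))
            (Filter.eventually_of_mem (Ioo_mem_nhdsLT_of_mem ⟨hT, le_refl T⟩) h)
        refine ⟨hlim v₁ hcv₁ fun s hs => (hPbelow s hs.1.le hs.2).1, ?_, ?_, ?_⟩
        · have h' : 0 ≤ u₁ T - u₀ := hlim (fun s => u₁ s - u₀) (hcu₁.sub continuous_const)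
            fun s hs => sub_nonneg.2 (hPbelow s hs.1.le hs.2).2.1
          linarith
        · have h' : 0 ≤ v₂ T - v₁ T := hlim (fun s => v₂ s - v₁ s) (hcv₂.sub hcv₁)
            fun s hs => sub_nonneg.2 (hPbelow s hs.1.le hs.2).2.2.1
          linarith
        · have h' : 0 ≤ u₂ T - u₁ T := hlim (fun s => u₂ s - u₁ s) (hcu₂.sub hcu₁)
            fun s hs => sub_nonneg.2 (hPbelow s hs.1.le hs.2).2.2.2
          linarith
    obtain ⟨hv₁T, hu₁T, hdT, heT⟩ := hPT
    -- positivity of the pushing derivatives at T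
    have ha1 : 0 < κ₁ * u₁ T := mul_pos hκ₁ (lt_of_lt_of_le hu₀ hu₁T)
    have ha2 : 0 < κ₂ * u₂ T - κ₁ * u₁ T := by nlinarith
    -- find ε > 0 where both stay positive
    have hcont : Continuous fun s => (κ₁ * u₁ s, κ₂ * u₂ s - κ₁ * u₁ s) :=
      ((continuous_const.mul hcu₁).prodMk
        ((continuous_const.mul hcu₂).sub (continuous_const.mul hcu₁)))
    have hev : ∀ᶠ s in nhds T, 0 < κ₁ * u₁ s ∧ 0 < κ₂ * u₂ s - κ₁ * u₁ s := by
      have h1 : ∀ᶠ s in nhds T, κ₁ * u₁ s ∈ Set.Ioi (0:ℝ) :=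
        (continuous_const.mul hcu₁).continuousAt.preimage_mem_nhds (Ioi_mem_nhds ha1)
      have h2 : ∀ᶠ s in nhds T, κ₂ * u₂ s - κ₁ * u₁ s ∈ Set.Ioi (0:ℝ) :=
        ((continuous_const.mul hcu₂).sub (continuous_const.mul hcu₁)).continuousAt.preimage_mem_nhds
          (Ioi_mem_nhds ha2)
      filter_upwards [h1, h2] with s hs1 hs2 using ⟨hs1, hs2⟩
    obtain ⟨δ, hδ, hball⟩ := Metric.eventually_nhds_iff.1 hev
    set ε : ℝ := δ / 2 with hε
    have hεpos : 0 < ε := by positivity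
    set I : Set ℝ := Set.Icc T (T + ε) with hI
    have hIsub : ∀ s ∈ I, 0 < κ₁ * u₁ s ∧ 0 < κ₂ * u₂ s - κ₁ * u₁ s := by
      intro s hs
      refine hball ?_
      rw [Real.dist_eq, abs_sub_lt_iff]
      constructor <;> [linarith [hs.2]; linarith [hs.1]]
    have hIconv : Convex ℝ I := convex_Icc _ _
    have hTI : T ∈ I := Set.left_mem_Icc.2 (by linarith)
    have hintI : interior I ⊆ I := interior_subset
    -- v₁ is monotone on I
    have hmv₁ : MonotoneOn v₁ I := by
      refine monotoneOn_of_hasDerivWithinAt_nonneg hIconv hcv₁.continuousOn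
        (fun x hx => ((hv₁ x).hasDerivWithinAt)) (fun x hx => (hIsub x (hintI hx)).1.le)
    have hv₁I : ∀ s ∈ I, 0 ≤ v₁ s := fun s hs => le_trans hv₁T (hmv₁ hTI hs hs.1)
    -- d = v₂ - v₁ is monotone on I
    have hmd : MonotoneOn (fun s => v₂ s - v₁ s) I := by
      refine monotoneOn_of_hasDerivWithinAt_nonneg hIconv (hcv₂.sub hcv₁).continuousOn
        (fun x hx => ((hv₂ x).sub (hv₁ x)).hasDerivWithinAt)
        (fun x hx => (hIsub x (hintI hx)).2.le)
    have hdI : ∀ s ∈ I, v₁ s ≤ v₂ s := by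
      intro s hs
      have h' : v₂ T - v₁ T ≤ v₂ s - v₁ s := hmd hTI hs hs.1
      linarith
    -- u₁ is monotone on I
    have hmu₁ : MonotoneOn u₁ I := by
      refine monotoneOn_of_hasDerivWithinAt_nonneg hIconv hcu₁.continuousOn
        (fun x hx => ((hu₁ x).hasDerivWithinAt)) (fun x hx => g_nonneg (hv₁I x (hintI hx)))
    have hu₁I : ∀ s ∈ I, u₀ ≤ u₁ s := fun s hs => le_trans hu₁T (hmu₁ hTI hs hs.1)
    -- e = u₂ - u₁ is monotone on I
    have hme : MonotoneOn (fun s => u₂ s - u₁ s) I := by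
      refine monotoneOn_of_hasDerivWithinAt_nonneg hIconv (hcu₂.sub hcu₁).continuousOn
        (fun x hx => ((hu₂ x).sub (hu₁ x)).hasDerivWithinAt)
        (fun x hx => sub_nonneg.2 ?_)
      rcases eq_or_lt_of_le (hdI x (hintI hx)) with h | h
      · rw [h]
      · exact (g_lt h).le
    have heI : ∀ s ∈ I, u₁ s ≤ u₂ s := by
      intro s hs
      have h' : u₂ T - u₁ T ≤ u₂ s - u₁ s := hme hTI hs hs.1
      linarith
    -- P holds on I, contradiction with T = sInf B
    obtain ⟨b, hbB, hbT⟩ := exists_lt_of_csInf_lt hBne (by linarith : sInf B < T + ε)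
    have hTb : T ≤ b := csInf_le hBbdd hbB
    exact hbB.2 ⟨hv₁I b ⟨hTb, hbT.le⟩, hu₁I b ⟨hTb, hbT.le⟩,
      hdI b ⟨hTb, hbT.le⟩, heI b ⟨hTb, hbT.le⟩⟩
  -- now the strict inequalities
  have hvlt : ∀ r : ℝ, 0 < r → v₁ r < v₂ r := by
    intro r hr
    have hsm : StrictMonoOn (fun s => v₂ s - v₁ s) (Set.Icc 0 r) := by
      refine strictMonoOn_of_hasDerivWithinAt_pos (convex_Icc _ _) (hcv₂.sub hcv₁).continuousOn
        (fun x hx => ((hv₂ x).sub (hv₁ x)).hasDerivWithinAt) (fun x hx => ?_)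
      rw [interior_Icc] at hx
      obtain ⟨_, hu₁x, _, hu₁u₂⟩ := hQ x hx.1.le
      nlinarith
    have h' : v₂ 0 - v₁ 0 < v₂ r - v₁ r :=
      hsm (Set.left_mem_Icc.2 hr.le) (Set.right_mem_Icc.2 hr.le) hr
    rw [hv₁0, hv₂0] at h'
    linarith
  intro r hr
  refine ⟨?_, hvlt r hr⟩
  have hsm : StrictMonoOn (fun s => u₂ s - u₁ s) (Set.Icc 0 r) := by
    refine strictMonoOn_of_hasDerivWithinAt_pos (convex_Icc _ _) (hcu₂.sub hcu₁).continuousOn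
      (fun x hx => ((hu₂ x).sub (hu₁ x)).hasDerivWithinAt) (fun x hx => ?_)
    rw [interior_Icc] at hx
    exact sub_pos.2 (g_lt (hvlt x hx.1))
  have h' : u₂ 0 - u₁ 0 < u₂ r - u₁ r :=
    hsm (Set.left_mem_Icc.2 hr.le) (Set.right_mem_Icc.2 hr.le) hr
  rw [hu₁0, hu₂0] at h'
  linarith

/-- Monotonicity with respect to the capillary constant κ. -/
theorem stmt_10 (u₀ κ₁ κ₂ : ℝ) (hu₀ : 0 < u₀) (hκ₁ : 0 < κ₁) (hκ : κ₁ < κ₂)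
    (u₁ v₁ u₂ v₂ : ℝ → ℝ)
    (hu₁ : ∀ r : ℝ, HasDerivAt u₁ (v₁ r / Real.sqrt (1 + v₁ r ^ 2)) r)
    (hv₁ : ∀ r : ℝ, HasDerivAt v₁ (κ₁ * u₁ r) r)
    (hu₁0 : u₁ 0 = u₀) (hv₁0 : v₁ 0 = 0)
    (hu₂ : ∀ r : ℝ, HasDerivAt u₂ (v₂ r / Real.sqrt (1 + v₂ r ^ 2)) r)
    (hv₂ : ∀ r : ℝ, HasDerivAt v₂ (κ₂ * u₂ r) r)
    (hu₂0 : u₂ 0 = u₀) (hv₂0 : v₂ 0 = 0) :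
    (∀ r : ℝ, r ≠ 0 → u₁ r < u₂ r) ∧
    (∀ r : ℝ, 0 < r →
      v₁ r / Real.sqrt (1 + v₁ r ^ 2) < v₂ r / Real.sqrt (1 + v₂ r ^ 2)) := by
  have hkey := key_pos u₀ κ₁ κ₂ hu₀ hκ₁ hκ u₁ v₁ u₂ v₂ hu₁ hv₁ hu₁0 hv₁0 hu₂ hv₂ hu₂0 hv₂0
  -- reflected solutions
  have hrefl_u : ∀ (u v : ℝ → ℝ),
      (∀ r : ℝ, HasDerivAt u (v r / Real.sqrt (1 + v r ^ 2)) r) →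
      ∀ r : ℝ, HasDerivAt (fun s => u (-s))
        ((-(v (-r))) / Real.sqrt (1 + (-(v (-r))) ^ 2)) r := by
    intro u v hu r
    have h := HasDerivAt.comp r (hu (-r)) (hasDerivAt_neg r)
    convert h using 1
    · rfl
    · rfl
    · rfl
    rw [neg_sq]
    ring
  have hrefl_v : ∀ (u v : ℝ → ℝ) (κ : ℝ),
      (∀ r : ℝ, HasDerivAt v (κ * u r) r) →
      ∀ r : ℝ, HasDerivAt (fun s => -(v (-s))) (κ * u (-r)) r := by
    intro u v κ hv r
    have h := (HasDerivAt.comp r (hv (-r)) (hasDerivAt_neg r)).neg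
    convert h using 1
    · rfl
    · rfl
    · rfl
    ring
  have hkey' := key_pos u₀ κ₁ κ₂ hu₀ hκ₁ hκ
    (fun s => u₁ (-s)) (fun s => -(v₁ (-s))) (fun s => u₂ (-s)) (fun s => -(v₂ (-s)))
    (hrefl_u u₁ v₁ hu₁) (hrefl_v u₁ v₁ κ₁ hv₁)
    (by simpa using hu₁0) (by simpa using hv₁0)
    (hrefl_u u₂ v₂ hu₂) (hrefl_v u₂ v₂ κ₂ hv₂)
    (by simpa using hu₂0) (by simpa using hv₂0)
  constructor
  · intro r hr
    rcases lt_or_gt_of_ne hr with h | h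
    · have := (hkey' (-r) (by linarith)).1
      simpa using this
    · exact (hkey r h).1
  · intro r hr
    exact g_lt (hkey r hr).2
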